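/- Let 𝔫 be a finite-dimensional Lie algebra over ℝ such that the complexification ℂ ⊗_ℝ 𝔫 admits a special grading. Then 𝔫 admits a faithful finite-dimensional module of dimension 1 + dim 𝔫; that is, there exist a real vector space W with dim W = 1 + dim 𝔫 and an injective Lie algebra homomorphism 𝔫 → End(W). -/

import Mathlib

open TensorProduct

/-- A (ℤ-)grading of a Lie algebra `𝔪` over `K`: a direct sum decomposition
`𝔪 = ⊕_{k ∈ ℤ} 𝔪ₖ` with `⁅𝔪ᵢ, 𝔪ⱼ⁆ ⊆ 𝔪ᵢ₊ⱼ`. -/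
def IsLieGrading (K 𝔪 : Type*) [CommRing K] [LieRing 𝔪] [LieAlgebra K 𝔪]
    (p : ℤ → Submodule K 𝔪) : Prop :=
  DirectSum.IsInternal p ∧
    ∀ (i j : ℤ), ∀ x ∈ p i, ∀ y ∈ p j, ⁅x, y⁆ ∈ p (i + j)

/-- A Lie algebra admits a *special* grading if it has a grading with `𝔪₀ ∩ 𝔷 = 0`,
where `𝔷` is the center. -/
def HasSpecialGrading (K 𝔪 : Type*) [CommRing K] [LieRing 𝔪] [LieAlgebra K 𝔪] : Prop :=
  ∃ p : ℤ → Submodule K 𝔪, IsLieGrading K 𝔪 p ∧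
    p 0 ⊓ (LieAlgebra.center K 𝔪).toSubmodule = ⊥

/-- A Lie algebra admits a *very special* grading if it has a grading with `𝔪₀ = 0`. -/
def HasVerySpecialGrading (K 𝔪 : Type*) [CommRing K] [LieRing 𝔪] [LieAlgebra K 𝔪] : Prop :=
  ∃ p : ℤ → Submodule K 𝔪, IsLieGrading K 𝔪 p ∧ p 0 = ⊥

/-- A Lie algebra admits a *non-negative special* grading if it has a grading with
`𝔪ₖ = 0` for `k < 0` and `𝔪₀ ∩ 𝔷 = 0`. -/
def HasNonnegSpecialGrading (K 𝔪 : Type*) [CommRing K] [LieRing 𝔪] [LieAlgebra K 𝔪] : Prop :=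
  ∃ p : ℤ → Submodule K 𝔪, IsLieGrading K 𝔪 p ∧ (∀ k < 0, p k = ⊥) ∧
    p 0 ⊓ (LieAlgebra.center K 𝔪).toSubmodule = ⊥

/-- A Lie algebra admits a *positive* grading if it has a grading with
`𝔪ₖ = 0` for `k ≤ 0`. -/
def HasPositiveGrading (K 𝔪 : Type*) [CommRing K] [LieRing 𝔪] [LieAlgebra K 𝔪] : Prop :=
  ∃ p : ℤ → Submodule K 𝔪, IsLieGrading K 𝔪 p ∧ ∀ k ≤ 0, p k = ⊥


section AuxiliaryForStatement17

open TensorProduct DirectSum Polynomial Matrix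
set_option linter.unusedSectionVars false





theorem exists_grading_derivation {K 𝔪 : Type*} [Field K] [LieRing 𝔪] [LieAlgebra K 𝔪] [CharZero K] (p : ℤ → Submodule K 𝔪)
    (hint : DirectSum.IsInternal p)
    (hbr : ∀ (i j : ℤ), ∀ x ∈ p i, ∀ y ∈ p j, ⁅x, y⁆ ∈ p (i + j)) :
    ∃ D : 𝔪 →ₗ[K] 𝔪, (∀ x y : 𝔪, D ⁅x, y⁆ = ⁅D x, y⁆ + ⁅x, D y⁆) ∧
      (∀ x : 𝔪, D x = 0 → x ∈ p 0) := by
  classical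
  let e : 𝔪 ≃ₗ[K] ⨁ k, p k := (LinearEquiv.ofBijective (DirectSum.coeLinearMap p) hint).symm
  let F : (⨁ k, p k) →ₗ[K] ⨁ k, p k :=
    DFinsupp.mapRange.linearMap (fun k => (k : K) • (LinearMap.id : p k →ₗ[K] p k))
  let D : 𝔪 →ₗ[K] 𝔪 := (DirectSum.coeLinearMap p) ∘ₗ F ∘ₗ (e : 𝔪 →ₗ[K] ⨁ k, p k)
  have he : ∀ (k : ℤ) (v : p k), e ((v : 𝔪)) = DirectSum.of (fun k => p k) k v := by
    intro k v
    apply (LinearEquiv.ofBijective (DirectSum.coeLinearMap p) hint).injective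
    simp only [LinearEquiv.apply_symm_apply, e]
    exact (DirectSum.coeLinearMap_of p k v).symm
  have hF : ∀ (c : ⨁ k, p k) (k : ℤ), F c k = (k : K) • (c k) := by
    intro c k
    show DFinsupp.mapRange (fun (i : ℤ) (x : p i) => ((i : K) • (LinearMap.id : p i →ₗ[K] p i)) x)
      (fun i => map_zero _) c k = _
    rw [DFinsupp.mapRange_apply]
    simp
  have hxe : ∀ x : 𝔪, (DirectSum.coeLinearMap p) (e x) = x := fun x =>
    (LinearEquiv.ofBijective (DirectSum.coeLinearMap p) hint).apply_symm_apply x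
  have hD : ∀ (k : ℤ), ∀ x ∈ p k, D x = (k : K) • x := by
    intro k x hx
    show (DirectSum.coeLinearMap p) (F (e x)) = _
    rw [show x = ((⟨x, hx⟩ : p k) : 𝔪) from rfl, he k ⟨x, hx⟩]
    have hsing : F (DirectSum.of (fun k => p k) k ⟨x, hx⟩)
        = DirectSum.of (fun k => p k) k ((k : K) • ⟨x, hx⟩) := by
      apply DFinsupp.ext
      intro j
      rw [hF]
      by_cases hj : j = k
      · subst hj; rw [DirectSum.of_eq_same, DirectSum.of_eq_same]
      · rw [DirectSum.of_eq_of_ne _ _ _ hj, DirectSum.of_eq_of_ne _ _ _ hj, smul_zero]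
    rw [hsing, DirectSum.coeLinearMap_of]
    simp
  refine ⟨D, ?_, ?_⟩
  · -- derivation property
    have htop : iSup p = ⊤ := hint.submodule_iSup_eq_top
    intro x y
    have hx : x ∈ iSup p := htop ▸ Submodule.mem_top
    have hy : y ∈ iSup p := htop ▸ Submodule.mem_top
    induction hx using Submodule.iSup_induction' with
    | mem i x hxi =>
      induction hy using Submodule.iSup_induction' with
      | mem j y hyj =>
        rw [hD i x hxi, hD j y hyj, hD (i + j) ⁅x, y⁆ (hbr i j x hxi y hyj)]
        rw [smul_lie, lie_smul]
        push_cast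
        rw [add_smul]
      | zero => simp only [lie_zero, map_zero, add_zero]
      | add y z hy hz hy' hz' =>
          simp only [lie_add, map_add, hy', hz']; abel
    | zero => simp only [zero_lie, map_zero, zero_add, add_zero, lie_zero]
    | add x z hx hz hx' hz' =>
        simp only [add_lie, map_add, hx', hz']; abel
  · intro x hx0
    have hFe : F (e x) = 0 := by
      apply hint.injective
      show (DirectSum.coeLinearMap p) _ = (DirectSum.coeLinearMap p) 0
      rw [map_zero]
      exact hx0
    have hcomp : ∀ k : ℤ, k ≠ 0 → e x k = 0 := by
      intro k hk
      have h1 : (k : K) • (e x k) = 0 := by rw [← hF, hFe]; rfl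
      have hkK : (k : K) ≠ 0 := Int.cast_ne_zero.mpr hk
      exact (smul_eq_zero.mp h1).resolve_left hkK
    have hex : e x = DirectSum.of (fun k => p k) 0 (e x 0) := by
      apply DFinsupp.ext
      intro k
      by_cases hk : k = 0
      · subst hk; rw [DirectSum.of_eq_same]
      · rw [hcomp k hk, DirectSum.of_eq_of_ne _ _ _ hk]
    have h2 := hxe x
    rw [hex, DirectSum.coeLinearMap_of] at h2
    rw [← h2]
    exact (e x 0).2



theorem exists_real_param_injective {V W : Type*} [AddCommGroup V] [Module ℝ V]
    [FiniteDimensional ℝ V] [AddCommGroup W] [Module ℝ W] [FiniteDimensional ℝ W]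
    (A B : V →ₗ[ℝ] W)
    (hAB : ∀ u v : V, A u = B v → B u + A v = 0 → u = 0 ∧ v = 0) :
    ∃ t : ℝ, ∀ x : V, A x + t • B x = 0 → x = 0 := by
  classical
  set m := Module.finrank ℝ V with hm
  set n := Module.finrank ℝ W with hn
  let b : Module.Basis (Fin m) ℝ V := Module.finBasis ℝ V
  let c : Module.Basis (Fin n) ℝ W := Module.finBasis ℝ W
  let Am : Matrix (Fin n) (Fin m) ℝ := LinearMap.toMatrix b c A
  let Bm : Matrix (Fin n) (Fin m) ℝ := LinearMap.toMatrix b c B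
  let M : Matrix (Fin n) (Fin m) ℂ := Matrix.of fun i j => (Am i j : ℂ) + Complex.I * Bm i j
  -- M is injective as a mulVec map
  have hMinj : ∀ w : Fin m → ℂ, M *ᵥ w = 0 → w = 0 := by
    intro w hw
    set w1 : Fin m → ℝ := fun j => (w j).re with hw1
    set w2 : Fin m → ℝ := fun j => (w j).im with hw2
    have hre : ∀ i, (Am *ᵥ w1) i - (Bm *ᵥ w2) i = 0 := by
      intro i
      have h0 := congrArg Complex.re (congrFun hw i)
      simpa [M, Matrix.mulVec, dotProduct, Complex.add_re, Complex.mul_re,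
        Finset.sum_sub_distrib, w1, w2] using h0
    have him : ∀ i, (Am *ᵥ w2) i + (Bm *ᵥ w1) i = 0 := by
      intro i
      have h0 := congrArg Complex.im (congrFun hw i)
      simpa [M, Matrix.mulVec, dotProduct, Complex.add_im, Complex.mul_im,
        Finset.sum_add_distrib, w1, w2] using h0
    set u : V := b.equivFun.symm w1 with hu
    set v : V := b.equivFun.symm w2 with hv
    have hbu : ⇑(b.repr u) = w1 := by
      have h1 : b.equivFun u = w1 := b.equivFun.apply_symm_apply w1
      rw [← h1]; rfl
    have hbv : ⇑(b.repr v) = w2 := by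
      have h1 : b.equivFun v = w2 := b.equivFun.apply_symm_apply w2
      rw [← h1]; rfl
    have eA : ∀ x : V, ⇑(c.repr (A x)) = Am *ᵥ ⇑(b.repr x) :=
      fun x => (LinearMap.toMatrix_mulVec_repr b c A x).symm
    have eB : ∀ x : V, ⇑(c.repr (B x)) = Bm *ᵥ ⇑(b.repr x) :=
      fun x => (LinearMap.toMatrix_mulVec_repr b c B x).symm
    have h1 : A u = B v := by
      apply c.repr.injective
      apply DFunLike.coe_injective
      show ⇑(c.repr (A u)) = ⇑(c.repr (B v))
      rw [eA, eB, hbu, hbv]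
      funext i
      have := hre i
      linarith
    have h2 : B u + A v = 0 := by
      apply c.repr.injective
      apply DFunLike.coe_injective
      show ⇑(c.repr (B u + A v)) = ⇑(c.repr 0)
      rw [map_add, map_zero]
      show ⇑(c.repr (B u)) + ⇑(c.repr (A v)) = ⇑(0 : Fin n →₀ ℝ)
      rw [Finsupp.coe_zero]
      rw [eA, eB, hbu, hbv]
      funext i
      have h3 := him i
      simp only [Pi.add_apply, Pi.zero_apply]
      linarith
    obtain ⟨hu0, hv0⟩ := hAB u v h1 h2
    have hw1 : w1 = 0 := by
      rw [← hbu, hu0]; simp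
    have hw2 : w2 = 0 := by
      rw [← hbv, hv0]; simp
    funext j
    have e1 : (w j).re = 0 := congrFun hw1 j
    have e2 : (w j).im = 0 := congrFun hw2 j
    exact Complex.ext e1 e2
  -- a left inverse L of M
  obtain ⟨L, hL⟩ : ∃ L : Matrix (Fin m) (Fin n) ℂ, L * M = 1 := by
    have hker : LinearMap.ker (Matrix.toLin' M) = ⊥ := by
      rw [LinearMap.ker_eq_bot']
      intro w hw
      exact hMinj w (by simpa [Matrix.toLin'_apply] using hw)
    obtain ⟨g, hg⟩ := (Matrix.toLin' M).exists_leftInverse_of_injective hker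
    refine ⟨LinearMap.toMatrix' g, ?_⟩
    rw [← LinearMap.toMatrix'_toLin' M, ← LinearMap.toMatrix'_comp, hg, LinearMap.toMatrix'_id]
  -- the determinant polynomial
  let Mp : Matrix (Fin n) (Fin m) ℂ[X] :=
    Matrix.of fun i j => C ((Am i j : ℂ)) + X * C ((Bm i j : ℂ))
  let Q : ℂ[X] := ((L.map C) * Mp).det
  have hQeval : ∀ t : ℂ, Q.eval t =
      (L * Matrix.of (fun i j => (Am i j : ℂ) + t * Bm i j)).det := by
    intro t
    have : Q.eval t = (((L.map C) * Mp).map (evalRingHom t)).det := by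
      exact RingHom.map_det (evalRingHom t) _
    have hLmap : (L.map ⇑C).map (eval t) = L := by
      rw [Matrix.map_map]
      funext i j
      simp [Matrix.map_apply]
    have hMpmap : Mp.map (eval t) = Matrix.of (fun i j => (Am i j : ℂ) + t * Bm i j) := by
      funext i j
      simp [Mp, Matrix.map_apply]
      ring
    rw [this, Matrix.map_mul, Polynomial.coe_evalRingHom, hLmap, hMpmap]
  have hQI : Q.eval Complex.I = 1 := by
    rw [hQeval]
    have : (Matrix.of fun i j => (Am i j : ℂ) + Complex.I * Bm i j) = M := rfl
    rw [this, hL, Matrix.det_one]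
  have hQne : Q ≠ 0 := fun h => by simp [h] at hQI
  -- pick a real t avoiding the roots
  have hfin : {t : ℝ | Q.eval (t : ℂ) = 0}.Finite := by
    have hroots : {z : ℂ | Q.IsRoot z}.Finite := Polynomial.finite_setOf_isRoot hQne
    have : {t : ℝ | Q.eval (t : ℂ) = 0} ⊆ (fun t : ℝ => (t : ℂ)) ⁻¹' {z : ℂ | Q.IsRoot z} := by
      intro t ht; exact ht
    exact Set.Finite.subset (hroots.preimage (fun a _ b _ h => by exact_mod_cast h)) this
  obtain ⟨t, ht⟩ := hfin.exists_notMem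
  have hdet : (L * Matrix.of (fun i j => (Am i j : ℂ) + (t : ℂ) * Bm i j)).det ≠ 0 := by
    rw [← hQeval]; exact ht
  refine ⟨t, ?_⟩
  intro x hx
  -- translate to matrices
  set w : Fin m → ℝ := ⇑(b.repr x) with hwdef
  have hABx : (Am + t • Bm) *ᵥ w = 0 := by
    have h0 : ⇑(c.repr (A x + t • B x)) = (Am + t • Bm) *ᵥ w := by
      have := LinearMap.toMatrix_mulVec_repr b c (A + t • B) x
      have hm : LinearMap.toMatrix b c (A + t • B) = Am + t • Bm := by
        simp [Am, Bm, map_add, LinearMap.map_smul]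
      rw [hm] at this
      exact this.symm
    rw [hx] at h0
    rw [← h0]
    simp
  set Mt : Matrix (Fin n) (Fin m) ℂ := Matrix.of fun i j => (Am i j : ℂ) + (t : ℂ) * Bm i j
  have hMt : Mt *ᵥ (fun j => ((w j : ℂ))) = 0 := by
    funext i
    have h0 := congrFun hABx i
    simp only [Matrix.mulVec, dotProduct, Matrix.add_apply, Matrix.smul_apply,
      smul_eq_mul, Pi.zero_apply, Mt, Matrix.of_apply] at h0 ⊢
    push_cast
    exact_mod_cast h0
  have hwC : (fun j => ((w j : ℂ))) = (0 : Fin m → ℂ) := by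
    have h1 : (L * Mt) *ᵥ (fun j => ((w j : ℂ))) = 0 := by
      rw [← Matrix.mulVec_mulVec, hMt, Matrix.mulVec_zero]
    have hunit : IsUnit (L * Mt).det := isUnit_iff_ne_zero.mpr hdet
    have := congrArg (fun z => (L * Mt)⁻¹ *ᵥ z) h1
    simpa [Matrix.mulVec_mulVec, Matrix.nonsing_inv_mul _ hunit] using this
  have hw0 : w = 0 := by
    funext j
    have h5 := congrFun hwC j
    simp only [Pi.zero_apply] at h5 ⊢
    exact_mod_cast h5
  have hrepr : b.repr x = 0 := DFunLike.coe_injective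
    (show ⇑(b.repr x) = ⇑(0 : Fin m →₀ ℝ) by rw [← hwdef, hw0]; simp)
  simpa using b.repr.map_eq_zero_iff.mp hrepr



variable {𝔫 : Type*} [LieRing 𝔫] [LieAlgebra ℝ 𝔫]

namespace StmtAux

noncomputable def iot : 𝔫 →ₗ[ℝ] ℂ ⊗[ℝ] 𝔫 := TensorProduct.mk ℝ ℂ 𝔫 1

noncomputable def rePart : ℂ ⊗[ℝ] 𝔫 →ₗ[ℝ] 𝔫 :=
  TensorProduct.lift ((LinearMap.lsmul ℝ 𝔫).comp Complex.reLm)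

noncomputable def imPart : ℂ ⊗[ℝ] 𝔫 →ₗ[ℝ] 𝔫 :=
  TensorProduct.lift ((LinearMap.lsmul ℝ 𝔫).comp Complex.imLm)

@[simp] lemma rePart_tmul (c : ℂ) (x : 𝔫) : rePart (c ⊗ₜ[ℝ] x) = c.re • x := rfl
@[simp] lemma imPart_tmul (c : ℂ) (x : 𝔫) : imPart (c ⊗ₜ[ℝ] x) = c.im • x := rfl
lemma iot_apply (x : 𝔫) : iot x = (1 : ℂ) ⊗ₜ[ℝ] x := rfl

lemma smul_iot (c : ℂ) (x : 𝔫) : c • (iot x : ℂ ⊗[ℝ] 𝔫) = c ⊗ₜ[ℝ] x := by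
  rw [iot_apply, TensorProduct.smul_tmul', smul_eq_mul, mul_one]

@[simp] lemma rePart_iot (x : 𝔫) : rePart (iot x) = x := by rw [iot_apply, rePart_tmul]; simp
@[simp] lemma imPart_iot (x : 𝔫) : imPart (iot x) = 0 := by rw [iot_apply, imPart_tmul]; simp
@[simp] lemma rePart_I_iot (x : 𝔫) : rePart (Complex.I • iot x) = 0 := by
  rw [smul_iot]; simp
@[simp] lemma imPart_I_iot (x : 𝔫) : imPart (Complex.I • iot x) = x := by
  rw [smul_iot]; simp

lemma decompose (z : ℂ ⊗[ℝ] 𝔫) : iot (rePart z) + Complex.I • iot (imPart z) = z := by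
  induction z using TensorProduct.induction_on with
  | zero => simp
  | tmul c x =>
    rw [rePart_tmul, imPart_tmul, iot_apply, iot_apply, TensorProduct.tmul_smul,
      TensorProduct.tmul_smul]
    rw [show ((c.re : ℝ) • ((1:ℂ) ⊗ₜ[ℝ] x) : ℂ ⊗[ℝ] 𝔫) = (c.re : ℂ) • ((1:ℂ) ⊗ₜ[ℝ] x) by
      rw [← algebraMap_smul ℂ (c.re) ((1:ℂ) ⊗ₜ[ℝ] x)]; rfl]
    rw [show ((c.im : ℝ) • ((1:ℂ) ⊗ₜ[ℝ] x) : ℂ ⊗[ℝ] 𝔫) = (c.im : ℂ) • ((1:ℂ) ⊗ₜ[ℝ] x) by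
      rw [← algebraMap_smul ℂ (c.im) ((1:ℂ) ⊗ₜ[ℝ] x)]; rfl]
    rw [smul_smul, ← add_smul]
    rw [show ((c.re : ℂ) + Complex.I * c.im) = c by
      rw [mul_comm]; exact Complex.re_add_im c]
    rw [TensorProduct.smul_tmul', smul_eq_mul, mul_one]
  | add z w hz hw =>
    calc iot (rePart (z + w)) + Complex.I • iot (imPart (z + w))
        = (iot (rePart z) + Complex.I • iot (imPart z))
          + (iot (rePart w) + Complex.I • iot (imPart w)) := by
          rw [map_add, map_add, map_add, map_add, smul_add]; abel
      _ = z + w := by rw [hz, hw]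

lemma unique {u v : 𝔫} (h : iot u + Complex.I • iot v = 0) : u = 0 ∧ v = 0 := by
  have h1 := congrArg rePart h
  rw [map_add, rePart_I_iot, rePart_iot, add_zero, map_zero] at h1
  have h2 := congrArg imPart h
  rw [map_add, imPart_I_iot, imPart_iot, zero_add, map_zero] at h2
  exact ⟨h1, h2⟩

lemma iot_bracket (x y : 𝔫) : (iot ⁅x, y⁆ : ℂ ⊗[ℝ] 𝔫) = ⁅iot x, iot y⁆ := by
  rw [iot_apply, iot_apply, iot_apply, LieAlgebra.ExtendScalars.bracket_tmul, mul_one]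

lemma lie_iot_central {x : 𝔫} (hx : ∀ y : 𝔫, ⁅y, x⁆ = 0) (z : ℂ ⊗[ℝ] 𝔫) :
    ⁅z, (iot x : ℂ ⊗[ℝ] 𝔫)⁆ = 0 := by
  induction z using TensorProduct.induction_on with
  | zero => simp
  | tmul c y =>
    rw [iot_apply, LieAlgebra.ExtendScalars.bracket_tmul, hx y, TensorProduct.tmul_zero]
  | add z w hz hw => rw [add_lie, hz, hw, add_zero]

lemma csmul_lie (c : ℂ) (w u : ℂ ⊗[ℝ] 𝔫) : ⁅c • w, u⁆ = c • ⁅w, u⁆ := by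
  rw [← lie_skew, lie_smul, ← lie_skew w u, smul_neg]

end StmtAux



open StmtAux in
theorem exists_good_derivations
    (p : ℤ → Submodule ℂ (ℂ ⊗[ℝ] 𝔫))
    (hint : DirectSum.IsInternal p)
    (hbr : ∀ (i j : ℤ), ∀ x ∈ p i, ∀ y ∈ p j, ⁅x, y⁆ ∈ p (i + j))
    (hcen : p 0 ⊓ (LieAlgebra.center ℂ (ℂ ⊗[ℝ] 𝔫)).toSubmodule = ⊥) :
    ∃ a b : 𝔫 →ₗ[ℝ] 𝔫,
      (∀ x y : 𝔫, a ⁅x, y⁆ = ⁅a x, y⁆ + ⁅x, a y⁆) ∧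
      (∀ x y : 𝔫, b ⁅x, y⁆ = ⁅b x, y⁆ + ⁅x, b y⁆) ∧
      (∀ u v : 𝔫, u ∈ LieAlgebra.center ℝ 𝔫 → v ∈ LieAlgebra.center ℝ 𝔫 →
        a u = b v → b u + a v = 0 → u = 0 ∧ v = 0) := by
  obtain ⟨D, hDder, hDker⟩ := exists_grading_derivation p hint hbr
  let a : 𝔫 →ₗ[ℝ] 𝔫 := rePart ∘ₗ (D.restrictScalars ℝ) ∘ₗ iot
  let b : 𝔫 →ₗ[ℝ] 𝔫 := imPart ∘ₗ (D.restrictScalars ℝ) ∘ₗ iot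
  have hab : ∀ x : 𝔫, D (iot x) = iot (a x) + Complex.I • iot (b x) := by
    intro x
    have := decompose (𝔫 := 𝔫) (D (iot x))
    rw [← this]; rfl
  have hder : ∀ x y : 𝔫,
      (a ⁅x, y⁆ = ⁅a x, y⁆ + ⁅x, a y⁆) ∧ (b ⁅x, y⁆ = ⁅b x, y⁆ + ⁅x, b y⁆) := by
    intro x y
    have key := hDder (iot x) (iot y)
    rw [← iot_bracket, hab ⁅x, y⁆, hab x, hab y] at key
    simp only [add_lie, lie_add, csmul_lie, lie_smul] at key
    rw [← iot_bracket, ← iot_bracket, ← iot_bracket, ← iot_bracket] at key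
    have key2 : iot (a ⁅x, y⁆ - (⁅a x, y⁆ + ⁅x, a y⁆))
        + Complex.I • iot (b ⁅x, y⁆ - (⁅b x, y⁆ + ⁅x, b y⁆)) = 0 := by
      rw [map_sub, map_sub, map_add, map_add, smul_sub, smul_add]
      rw [sub_add_sub_comm, key]
      abel
    obtain ⟨h1, h2⟩ := unique key2
    exact ⟨sub_eq_zero.mp h1, sub_eq_zero.mp h2⟩
  refine ⟨a, b, fun x y => (hder x y).1, fun x y => (hder x y).2, ?_⟩
  intro u v hu hv h1 h2
  have hucen : ∀ y : 𝔫, ⁅y, u⁆ = 0 := (LieModule.mem_maxTrivSubmodule ℝ 𝔫 𝔫 u).mp hu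
  have hvcen : ∀ y : 𝔫, ⁅y, v⁆ = 0 := (LieModule.mem_maxTrivSubmodule ℝ 𝔫 𝔫 v).mp hv
  set z : ℂ ⊗[ℝ] 𝔫 := iot u + Complex.I • iot v with hz
  have hzcen : z ∈ LieAlgebra.center ℂ (ℂ ⊗[ℝ] 𝔫) := by
    rw [LieModule.mem_maxTrivSubmodule]
    intro w
    rw [hz, lie_add, lie_smul, lie_iot_central hucen, lie_iot_central hvcen, smul_zero, add_zero]
  have hDz : D z = 0 := by
    rw [hz, map_add, LinearMap.map_smul, hab, hab]
    rw [smul_add, smul_smul, Complex.I_mul_I, neg_one_smul]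
    rw [show iot (a u) + Complex.I • iot (b u) + (Complex.I • iot (a v) + -iot (b v))
        = iot (a u) - iot (b v) + Complex.I • (iot (b u) + iot (a v)) by
      rw [smul_add]; abel]
    rw [← map_sub, ← map_add, h1, sub_self, map_zero, zero_add]
    have : b u + a v = 0 := h2
    rw [this, map_zero, smul_zero]
  have hz0 : z = 0 := by
    have : z ∈ p 0 ⊓ (LieAlgebra.center ℂ (ℂ ⊗[ℝ] 𝔫)).toSubmodule :=
      ⟨hDker z hDz, hzcen⟩
    rw [hcen] at this
    exact this
  exact unique hz0


end AuxiliaryForStatement17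

attribute [local instance] LieRing.ofAssociativeRing

set_option maxHeartbeats 1000000 in
set_option synthInstance.maxHeartbeats 200000 in
/-- Let `𝔫` be a finite-dimensional real Lie algebra whose
complexification admits a special grading.  Then `𝔫` has a faithful module of dimension
`1 + dim 𝔫`: there is an injective Lie algebra homomorphism from `𝔫` into the
endomorphisms of a real vector space of dimension `1 + dim 𝔫`. -/
theorem exists_faithful_module_of_hasSpecialGrading
    {𝔫 : Type*} [LieRing 𝔫] [LieAlgebra ℝ 𝔫] [FiniteDimensional ℝ 𝔫]
    (h : HasSpecialGrading ℂ (ℂ ⊗[ℝ] 𝔫)) :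
    ∃ φ : 𝔫 →ₗ⁅ℝ⁆ Module.End ℝ (Fin (1 + Module.finrank ℝ 𝔫) → ℝ),
      Function.Injective φ := by
  obtain ⟨p, ⟨hint, hbr⟩, hcen⟩ := h
  obtain ⟨a, b, hdera, hderb, hpair⟩ := exists_good_derivations p hint hbr hcen
  set Z : Submodule ℝ 𝔫 := (LieAlgebra.center ℝ 𝔫).toSubmodule with hZ
  have hAB : ∀ u v : Z, (a ∘ₗ Z.subtype) u = (b ∘ₗ Z.subtype) v →
      (b ∘ₗ Z.subtype) u + (a ∘ₗ Z.subtype) v = 0 → u = 0 ∧ v = 0 := by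
    intro u v h1 h2
    have := hpair u v u.2 v.2 h1 (by simpa using h2)
    exact ⟨Subtype.ext this.1, Subtype.ext this.2⟩
  obtain ⟨t, ht⟩ := exists_real_param_injective (a ∘ₗ Z.subtype) (b ∘ₗ Z.subtype) hAB
  set δ : 𝔫 →ₗ[ℝ] 𝔫 := a + t • b with hδ
  have hδder : ∀ x y : 𝔫, δ ⁅x, y⁆ = ⁅δ x, y⁆ + ⁅x, δ y⁆ := by
    intro x y
    simp only [hδ, LinearMap.add_apply, LinearMap.smul_apply, hdera x y, hderb x y,
      smul_add, smul_lie, lie_smul, add_lie, lie_add]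
    abel
  have hδinj : ∀ x : 𝔫, δ x = 0 → (∀ y : 𝔫, ⁅x, y⁆ = 0) → x = 0 := by
    intro x hx hxc
    have hxZ : x ∈ Z := by
      rw [hZ]
      show x ∈ LieAlgebra.center ℝ 𝔫
      rw [LieModule.mem_maxTrivSubmodule]
      intro y
      rw [← lie_skew, hxc y, neg_zero]
    have := ht ⟨x, hxZ⟩ (by
      simp only [LinearMap.add_apply, LinearMap.smul_apply, LinearMap.comp_apply,
        Submodule.subtype_apply]
      simpa [hδ] using hx)
    exact congrArg Subtype.val this
  -- the representation on ℝ × 𝔫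
  let act : 𝔫 → Module.End ℝ (ℝ × 𝔫) := fun x =>
    (LinearMap.inr ℝ ℝ 𝔫) ∘ₗ
      ((LinearMap.fst ℝ ℝ 𝔫).smulRight (δ x) +
        ((LieAlgebra.ad ℝ 𝔫 x) : 𝔫 →ₗ[ℝ] 𝔫) ∘ₗ (LinearMap.snd ℝ ℝ 𝔫))
  have act_apply : ∀ (x : 𝔫) (q : ℝ × 𝔫), act x q = (0, q.1 • δ x + ⁅x, q.2⁆) := by
    intro x q; rfl
  let ψ : 𝔫 →ₗ⁅ℝ⁆ Module.End ℝ (ℝ × 𝔫) :=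
    { toFun := act
      map_add' := by
        intro x y
        apply LinearMap.ext
        intro q
        simp only [act_apply, LinearMap.add_apply, act_apply, map_add, add_lie, smul_add]
        apply Prod.ext <;> simp <;> abel
      map_smul' := by
        intro s x
        apply LinearMap.ext
        intro q
        rw [RingHom.id_apply, LinearMap.smul_apply, act_apply, act_apply, map_smul, smul_lie,
          Prod.smul_mk, smul_zero, smul_add, smul_comm s q.1]
      map_lie' := by
        intro x y
        apply LinearMap.ext
        intro q
        rw [LieRing.of_associative_ring_bracket, LinearMap.sub_apply,
          Module.End.mul_apply, Module.End.mul_apply]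
        simp only [act_apply]
        apply Prod.ext
        · simp
        · show q.1 • δ ⁅x, y⁆ + ⁅⁅x, y⁆, q.2⁆
            = ((0 : ℝ) • δ x + ⁅x, q.1 • δ y + ⁅y, q.2⁆⁆)
              - ((0 : ℝ) • δ y + ⁅y, q.1 • δ x + ⁅x, q.2⁆⁆)
          rw [zero_smul, zero_smul, zero_add, zero_add, lie_add, lie_add,
            lie_smul, lie_smul, hδder x y, lie_lie, ← lie_skew (δ x) y, smul_add, smul_neg]
          abel }
  have hψinj : Function.Injective ψ := by
    intro x y hxy
    rw [← sub_eq_zero] at hxy ⊢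
    have h0 : ψ (x - y) = 0 := by rw [map_sub, hxy]
    set d := x - y
    have h1 : δ d = 0 := by
      have := congrArg (fun f : Module.End ℝ (ℝ × 𝔫) => (f ((1 : ℝ), (0 : 𝔫))).2) h0
      simpa [act_apply, ψ] using this
    have h2 : ∀ z : 𝔫, ⁅d, z⁆ = 0 := by
      intro z
      have := congrArg (fun f : Module.End ℝ (ℝ × 𝔫) => (f ((0 : ℝ), z)).2) h0
      simpa [act_apply, ψ] using this
    exact hδinj d h1 h2
  -- transport to Fin (1 + finrank) → ℝ
  have hfr : Module.finrank ℝ (ℝ × 𝔫) = Module.finrank ℝ (Fin (1 + Module.finrank ℝ 𝔫) → ℝ) := by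
    rw [Module.finrank_prod, Module.finrank_self, Module.finrank_fin_fun]
  let e : (ℝ × 𝔫) ≃ₗ[ℝ] (Fin (1 + Module.finrank ℝ 𝔫) → ℝ) := LinearEquiv.ofFinrankEq _ _ hfr
  refine ⟨{ toFun := fun x => e.conj (ψ x)
            map_add' := by
              intro x y
              show e.conj (ψ (x + y)) = e.conj (ψ x) + e.conj (ψ y)
              rw [map_add]
              exact e.conj.map_add _ _
            map_smul' := by
              intro s x
              show e.conj (ψ (s • x)) = s • e.conj (ψ x)
              rw [map_smul]
              exact e.conj.map_smul _ _
            map_lie' := by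
              intro x y
              show e.conj (ψ ⁅x, y⁆) = ⁅e.conj (ψ x), e.conj (ψ y)⁆
              rw [LieHom.map_lie, LieRing.of_associative_ring_bracket,
                LieRing.of_associative_ring_bracket, map_sub]
              simp only [Module.End.mul_eq_comp]
              rw [LinearEquiv.conj_comp, LinearEquiv.conj_comp] }, ?_⟩
  intro x y hxy
  apply hψinj
  exact e.conj.injective hxy
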